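/- (Proposition 2, survival branch.) Let κ ≥ θ ≥ 2 be integers, λ ≥ 0 a real, and p ∈ (0,1]. Let ρ : [0,∞) → (0,1] be differentiable with ρ(0) = p, satisfying the mean-field equation ρ'(t) = −ρ(t) + λ·(1−ρ(t))·Bin(κ,ρ(t),θ) for all t ≥ 0. If λ ≥ λ_c^MF(κ,θ) and p ≥ p_c^MF(κ,θ,λ), then ρ(t) ≥ p_c^MF(κ,θ,λ) > 0 for all t ≥ 0. -/

import Mathlib

/-- Bin(κ,x,θ) = ∑_{i=θ}^{κ} (κ choose i) x^i (1−x)^{κ−i}. -/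
noncomputable def binTail (κ : ℕ) (x : ℝ) (θ : ℕ) : ℝ :=
  ∑ i ∈ Finset.Icc θ κ, (κ.choose i : ℝ) * x ^ i * (1 - x) ^ (κ - i)

/-- H(κ,θ,λ;x) = −1 + λ·((1−x)/x)·Bin(κ,x,θ). -/
noncomputable def Hmf (κ θ : ℕ) (lam x : ℝ) : ℝ :=
  -1 + lam * ((1 - x) / x) * binTail κ x θ

/-- λ_c^MF(κ,θ) = sup{λ ≥ 0 : sup_{x∈(0,1]} H(κ,θ,λ;x) < 0}. -/
noncomputable def lambdaMF (κ θ : ℕ) : ℝ :=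
  sSup {lam : ℝ | 0 ≤ lam ∧ sSup ((fun x => Hmf κ θ lam x) '' Set.Ioc 0 1) < 0}

/-- p_c^MF(κ,θ,λ) = inf{x ∈ (0,1] : H(κ,θ,λ;x) ≥ 0}. -/
noncomputable def pcMF (κ θ : ℕ) (lam : ℝ) : ℝ :=
  sInf {x ∈ Set.Ioc (0:ℝ) 1 | 0 ≤ Hmf κ θ lam x}

/-- Proposition 2, survival branch. -/
theorem stmt4 (κ θ : ℕ) (hθ : 2 ≤ θ) (hκθ : θ ≤ κ) (lam : ℝ) (hlam : 0 ≤ lam)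
    (p : ℝ) (hp : p ∈ Set.Ioc (0:ℝ) 1) (ρ : ℝ → ℝ)
    (hρmem : ∀ t, 0 ≤ t → ρ t ∈ Set.Ioc (0:ℝ) 1)
    (hρ0 : ρ 0 = p)
    (hderiv : ∀ t, 0 ≤ t →
      HasDerivAt ρ (-ρ t + lam * (1 - ρ t) * binTail κ (ρ t) θ) t)
    (hcrit : lambdaMF κ θ ≤ lam) (hpcrit : pcMF κ θ lam ≤ p) :
    (∀ t, 0 ≤ t → pcMF κ θ lam ≤ ρ t) ∧ 0 < pcMF κ θ lam := by
  classical
  obtain ⟨hp0, hp1⟩ := hp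
  set S : Set ℝ := {x ∈ Set.Ioc (0:ℝ) 1 | 0 ≤ Hmf κ θ lam x} with hSdef
  set pc : ℝ := pcMF κ θ lam with hpcdef
  have hpc_def : pc = sInf S := rfl
  -- the polynomial G with x * G x = (1-x) * binTail
  set Gp : ℝ → ℝ := fun x =>
    (1 - x) * ∑ i ∈ Finset.Icc θ κ, (κ.choose i : ℝ) * x ^ (i-1) * (1 - x) ^ (κ - i) with hGpdef
  have hxG : ∀ x : ℝ, x * Gp x = (1 - x) * binTail κ x θ := by
    intro x
    have hsum : x * (∑ i ∈ Finset.Icc θ κ, (κ.choose i : ℝ) * x ^ (i-1) * (1 - x) ^ (κ - i))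
        = ∑ i ∈ Finset.Icc θ κ, (κ.choose i : ℝ) * x ^ i * (1 - x) ^ (κ - i) := by
      rw [Finset.mul_sum]
      refine Finset.sum_congr rfl ?_
      intro i hi
      obtain ⟨hiθ, hiκ⟩ := Finset.mem_Icc.mp hi
      have hx : x * x ^ (i-1) = x ^ i := by
        rw [← pow_succ']
        congr 1
        omega
      calc x * ((κ.choose i : ℝ) * x ^ (i-1) * (1 - x) ^ (κ - i))
          = (κ.choose i : ℝ) * (x * x ^ (i-1)) * (1 - x) ^ (κ - i) := by ring
        _ = (κ.choose i : ℝ) * x ^ i * (1 - x) ^ (κ - i) := by rw [hx]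
    calc x * Gp x = (1 - x) * (x * ∑ i ∈ Finset.Icc θ κ,
          (κ.choose i : ℝ) * x ^ (i-1) * (1 - x) ^ (κ - i)) := by rw [hGpdef]; ring
      _ = (1 - x) * binTail κ x θ := by rw [hsum]; rfl
  have hGcont : Continuous Gp := by
    apply Continuous.mul
    · fun_prop
    · exact continuous_finset_sum _ (fun i _ => by fun_prop)
  have hH : ∀ (μ x : ℝ), x ≠ 0 → Hmf κ θ μ x = -1 + μ * Gp x := by
    intro μ x hx
    unfold Hmf
    calc -1 + μ * ((1 - x) / x) * binTail κ x θ
        = -1 + μ * (((1 - x) * binTail κ x θ) / x) := by ring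
      _ = -1 + μ * ((x * Gp x) / x) := by rw [← hxG x]
      _ = -1 + μ * Gp x := by rw [mul_div_cancel_left₀ _ hx]
  -- maximum of Gp on [0,1]
  obtain ⟨x₀, hx₀mem, hx₀max⟩ := isCompact_Icc.exists_isMaxOn
    (Set.nonempty_Icc.mpr (zero_le_one' ℝ)) hGcont.continuousOn
  set M : ℝ := Gp x₀ with hMdef
  have hGhalf : 0 < Gp (1/2 : ℝ) := by
    rw [hGpdef]
    apply mul_pos (by norm_num)
    apply Finset.sum_pos
    · intro i hi
      obtain ⟨hiθ, hiκ⟩ := Finset.mem_Icc.mp hi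
      have hpos : (0:ℝ) < κ.choose i := by exact_mod_cast Nat.choose_pos hiκ
      positivity
    · exact Finset.nonempty_Icc.mpr hκθ
  have hMpos : 0 < M := lt_of_lt_of_le hGhalf (hx₀max (by norm_num : (1/2:ℝ) ∈ Set.Icc 0 1))
  have hG0 : Gp 0 = 0 := by
    rw [hGpdef]
    simp only
    rw [Finset.sum_eq_zero]
    · ring
    · intro i hi
      obtain ⟨hiθ, hiκ⟩ := Finset.mem_Icc.mp hi
      have : i - 1 ≠ 0 := by omega
      rw [zero_pow this]
      ring
  have hx₀pos : 0 < x₀ := by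
    rcases lt_or_eq_of_le hx₀mem.1 with h | h
    · exact h
    · exfalso
      have hM0 : M = 0 := by rw [hMdef, ← h, hG0]
      rw [hM0] at hMpos; exact lt_irrefl _ hMpos
  have hx₀Ioc : x₀ ∈ Set.Ioc (0:ℝ) 1 := ⟨hx₀pos, hx₀mem.2⟩
  -- supercriticality: 1 ≤ lam * M
  set A : Set ℝ := {lam : ℝ | 0 ≤ lam ∧ sSup ((fun x => Hmf κ θ lam x) '' Set.Ioc 0 1) < 0}
    with hAdef
  have hlamA : lambdaMF κ θ = sSup A := rfl
  have key : 1 ≤ lam * M := by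
    by_contra hlt
    push_neg at hlt
    have hlam1M : lam < 1/M := (lt_div_iff₀ hMpos).mpr (by linarith)
    set μ : ℝ := (lam + 1/M)/2 with hμdef
    have hμ1 : lam < μ := by rw [hμdef]; linarith
    have hμ0 : 0 ≤ μ := by
      have : 0 < 1/M := by positivity
      rw [hμdef]; linarith
    have hμ2 : μ * M < 1 := by
      have h1M : (1/M) * M = 1 := by field_simp
      have hexp : μ * M = (lam * M)/2 + ((1/M) * M)/2 := by rw [hμdef]; ring
      rw [hexp, h1M]; linarith
    have himub : ∀ y ∈ (fun x => Hmf κ θ μ x) '' Set.Ioc 0 1, y ≤ -1 + μ * M := by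
      rintro y ⟨x, hx, rfl⟩
      show Hmf κ θ μ x ≤ -1 + μ * M
      rw [hH μ x (ne_of_gt hx.1)]
      have : Gp x ≤ M := hx₀max ⟨le_of_lt hx.1, hx.2⟩
      have := mul_le_mul_of_nonneg_left this hμ0
      linarith
    have hμA : μ ∈ A := by
      refine ⟨hμ0, ?_⟩
      have hne : ((fun x => Hmf κ θ μ x) '' Set.Ioc 0 1).Nonempty :=
        ⟨_, Set.mem_image_of_mem _ (Set.right_mem_Ioc.mpr one_pos)⟩
      have := csSup_le hne himub
      linarith
    have hbdd : BddAbove A := by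
      refine ⟨1/M, ?_⟩
      rintro ν ⟨hν0, hνsup⟩
      have himub' : BddAbove ((fun x => Hmf κ θ ν x) '' Set.Ioc 0 1) := by
        refine ⟨-1 + ν * M, ?_⟩
        rintro y ⟨x, hx, rfl⟩
        show Hmf κ θ ν x ≤ -1 + ν * M
        rw [hH ν x (ne_of_gt hx.1)]
        have : Gp x ≤ M := hx₀max ⟨le_of_lt hx.1, hx.2⟩
        have := mul_le_mul_of_nonneg_left this hν0
        linarith
      have hmem : Hmf κ θ ν x₀ ∈ (fun x => Hmf κ θ ν x) '' Set.Ioc 0 1 :=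
        Set.mem_image_of_mem _ hx₀Ioc
      have h1 : Hmf κ θ ν x₀ ≤ sSup ((fun x => Hmf κ θ ν x) '' Set.Ioc 0 1) :=
        le_csSup himub' hmem
      have h2 : Hmf κ θ ν x₀ < 0 := lt_of_le_of_lt h1 hνsup
      rw [hH ν x₀ (ne_of_gt hx₀pos)] at h2
      rw [le_div_iff₀ hMpos]
      linarith
    have : μ ≤ lambdaMF κ θ := by rw [hlamA]; exact le_csSup hbdd hμA
    linarith
  have hlampos : 0 < lam := by nlinarith
  -- x₀ ∈ S, so S is nonempty
  have hx₀S : x₀ ∈ S := by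
    refine ⟨hx₀Ioc, ?_⟩
    rw [hH lam x₀ (ne_of_gt hx₀pos)]
    linarith
  have hSne : S.Nonempty := ⟨x₀, hx₀S⟩
  -- lower bound on S
  have hGle : ∀ x ∈ Set.Icc (0:ℝ) 1, Gp x ≤ 2^κ * x := by
    rintro x ⟨hx0, hx1⟩
    have h1x : (0:ℝ) ≤ 1 - x := by linarith
    have hterm : ∀ i ∈ Finset.Icc θ κ,
        (κ.choose i : ℝ) * x ^ (i-1) * (1 - x) ^ (κ - i) ≤ (κ.choose i : ℝ) * x := by
      intro i hi
      obtain ⟨hiθ, hiκ⟩ := Finset.mem_Icc.mp hi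
      have hc : (0:ℝ) ≤ κ.choose i := by positivity
      have hxp : x ^ (i-1) ≤ x := by
        calc x ^ (i-1) ≤ x ^ 1 := pow_le_pow_of_le_one hx0 hx1 (by omega)
          _ = x := pow_one x
      have hp2 : (1 - x) ^ (κ - i) ≤ 1 := pow_le_one₀ h1x (by linarith)
      have hxpnn : 0 ≤ x ^ (i-1) := pow_nonneg hx0 _
      have hp2nn : 0 ≤ (1 - x) ^ (κ - i) := pow_nonneg h1x _
      calc (κ.choose i : ℝ) * x ^ (i-1) * (1 - x) ^ (κ - i)
          ≤ (κ.choose i : ℝ) * x ^ (i-1) * 1 :=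
            mul_le_mul_of_nonneg_left hp2 (by positivity)
        _ = (κ.choose i : ℝ) * x ^ (i-1) := by ring
        _ ≤ (κ.choose i : ℝ) * x := mul_le_mul_of_nonneg_left hxp hc
    have hsum1 : (∑ i ∈ Finset.Icc θ κ, (κ.choose i : ℝ) * x ^ (i-1) * (1 - x) ^ (κ - i))
        ≤ ∑ i ∈ Finset.Icc θ κ, (κ.choose i : ℝ) * x := Finset.sum_le_sum hterm
    have hchoose : (∑ i ∈ Finset.Icc θ κ, (κ.choose i : ℝ)) ≤ 2^κ := by
      have hnat : (∑ i ∈ Finset.Icc θ κ, κ.choose i) ≤ ∑ i ∈ Finset.range (κ+1), κ.choose i := by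
        apply Finset.sum_le_sum_of_subset
        intro i hi
        simp only [Finset.mem_Icc, Finset.mem_range] at *
        omega
      rw [Nat.sum_range_choose] at hnat
      calc (∑ i ∈ Finset.Icc θ κ, (κ.choose i : ℝ))
          = ((∑ i ∈ Finset.Icc θ κ, κ.choose i : ℕ) : ℝ) := by push_cast; ring
        _ ≤ ((2^κ : ℕ) : ℝ) := by exact_mod_cast hnat
        _ = 2^κ := by push_cast; ring
    have hsum2 : (∑ i ∈ Finset.Icc θ κ, (κ.choose i : ℝ) * x) ≤ 2^κ * x := by
      rw [← Finset.sum_mul]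
      exact mul_le_mul_of_nonneg_right hchoose hx0
    have hSnn : 0 ≤ ∑ i ∈ Finset.Icc θ κ, (κ.choose i : ℝ) * x ^ (i-1) * (1 - x) ^ (κ - i) := by
      apply Finset.sum_nonneg
      intro i hi
      have hc : (0:ℝ) ≤ κ.choose i := by positivity
      positivity
    calc Gp x ≤ 1 * (∑ i ∈ Finset.Icc θ κ, (κ.choose i : ℝ) * x ^ (i-1) * (1 - x) ^ (κ - i)) := by
          rw [hGpdef]
          exact mul_le_mul_of_nonneg_right (by linarith) hSnn
      _ = ∑ i ∈ Finset.Icc θ κ, (κ.choose i : ℝ) * x ^ (i-1) * (1 - x) ^ (κ - i) := one_mul _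
      _ ≤ 2^κ * x := le_trans hsum1 hsum2
  set ε : ℝ := 1/(lam * 2^κ) with hεdef
  have hεpos : 0 < ε := by rw [hεdef]; positivity
  have hSlb : ∀ x ∈ S, ε ≤ x := by
    rintro x ⟨⟨hx0, hx1⟩, hHx⟩
    rw [hH lam x (ne_of_gt hx0)] at hHx
    have h1 : 1 ≤ lam * Gp x := by linarith
    have h2 : lam * Gp x ≤ lam * (2^κ * x) :=
      mul_le_mul_of_nonneg_left (hGle x ⟨le_of_lt hx0, hx1⟩) hlam
    rw [hεdef, div_le_iff₀ (by positivity)]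
    nlinarith
  have hbddS : BddBelow S := ⟨ε, hSlb⟩
  have hpcpos : 0 < pc := by
    rw [hpc_def]
    exact lt_of_lt_of_le hεpos (le_csInf hSne hSlb)
  have hpcle : ∀ x ∈ S, pc ≤ x := fun x hx => by rw [hpc_def]; exact csInf_le hbddS hx
  have hpc1 : pc ≤ 1 := le_trans hpcrit hp1
  -- H(pc) ≥ 0
  have hpcH : 1 ≤ lam * Gp pc := by
    by_contra hlt
    push_neg at hlt
    obtain ⟨δ, hδpos, hsub⟩ := Metric.isOpen_iff.mp
      (isOpen_lt (continuous_const.mul hGcont) continuous_const) pc hlt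
    have hall : ∀ x ∈ S, pc + δ ≤ x := by
      intro x hx
      have hxpc : pc ≤ x := hpcle x hx
      by_contra hcon
      push_neg at hcon
      have hball : x ∈ Metric.ball pc δ := by
        rw [Metric.mem_ball, Real.dist_eq, abs_of_nonneg (by linarith)]
        linarith
      have hlt' : lam * Gp x < 1 := hsub hball
      obtain ⟨⟨hx0, hx1⟩, hHx⟩ := hx
      rw [hH lam x (ne_of_gt hx0)] at hHx
      linarith
    have : pc + δ ≤ pc := by
      conv_rhs => rw [hpc_def]
      exact le_csInf hSne hall
    linarith
  -- the vector field F
  set F : ℝ → ℝ := fun x => -x + lam * (1 - x) * binTail κ x θ with hFdef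
  have hFeq : ∀ x : ℝ, F x = x * (lam * Gp x - 1) := by
    intro x
    rw [hFdef]
    simp only
    unfold binTail
    have h := hxG x
    unfold binTail at h
    nlinarith [h]
  have hFpc : 0 ≤ F pc := by
    rw [hFeq]
    apply mul_nonneg (le_of_lt hpcpos)
    linarith
  -- smoothness and Lipschitz bound on [0,1]
  have hbtc : ContDiff ℝ 1 (fun x : ℝ => binTail κ x θ) := by
    unfold binTail
    exact ContDiff.sum (fun i _ => by fun_prop)
  have hFcd : ContDiff ℝ 1 F := by
    rw [hFdef]
    exact (contDiff_id.neg).add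
      ((contDiff_const.mul (contDiff_const.sub contDiff_id)).mul hbtc)
  obtain ⟨C, hC⟩ := isCompact_Icc.exists_bound_of_continuousOn
    ((hFcd.continuous_deriv le_rfl).continuousOn : ContinuousOn (deriv F) (Set.Icc (0:ℝ) 1))
  have hC0 : 0 ≤ C := le_trans (norm_nonneg _) (hC 0 (by norm_num))
  have hpcIcc : pc ∈ Set.Icc (0:ℝ) 1 := ⟨le_of_lt hpcpos, hpc1⟩
  have hlip : ∀ x ∈ Set.Icc (0:ℝ) 1, x ≤ pc → F pc - F x ≤ C * (pc - x) := by
    intro x hx hxpc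
    have h := (convex_Icc (0:ℝ) 1).norm_image_sub_le_of_norm_deriv_le
      (fun z _ => hFcd.differentiable one_ne_zero z) hC hx hpcIcc
    rw [Real.norm_eq_abs, Real.norm_eq_abs] at h
    calc F pc - F x ≤ |F pc - F x| := le_abs_self _
      _ ≤ C * |pc - x| := h
      _ = C * (pc - x) := by rw [abs_of_nonneg (by linarith)]
  refine ⟨?_, hpcpos⟩
  intro t1 ht1
  by_contra hcon
  push_neg at hcon
  have hρcont : ∀ t, 0 ≤ t → ContinuousAt ρ t := fun t ht => (hderiv t ht).continuousAt
  set T : Set ℝ := Set.Icc 0 t1 ∩ ρ ⁻¹' (Set.Ici pc) with hTdef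
  have hTmem : ∀ s : ℝ, s ∈ T ↔ (s ∈ Set.Icc 0 t1 ∧ pc ≤ ρ s) := by
    intro s
    rw [hTdef]
    simp [Set.mem_inter_iff, Set.mem_preimage, Set.mem_Ici]
  have hTne : T.Nonempty := by
    refine ⟨0, (hTmem 0).mpr ⟨⟨le_rfl, ht1⟩, ?_⟩⟩
    rw [hρ0]; exact hpcrit
  have hTbdd : BddAbove T := ⟨t1, fun s hs => ((hTmem s).mp hs).1.2⟩
  have hTclosed : IsClosed T := by
    rw [hTdef]
    exact ContinuousOn.preimage_isClosed_of_isClosed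
      (fun s hs => (hρcont s hs.1).continuousWithinAt) isClosed_Icc isClosed_Ici
  set t0 : ℝ := sSup T with ht0def
  have ht0T : t0 ∈ T := hTclosed.csSup_mem hTne hTbdd
  obtain ⟨⟨ht00, ht0t1⟩, ht0ρ⟩ := (hTmem t0).mp ht0T
  have ht0lt : t0 < t1 := by
    rcases lt_or_eq_of_le ht0t1 with h | h
    · exact h
    · exfalso; rw [h] at ht0ρ; linarith
  have hmid : ∀ s, t0 < s → s ≤ t1 → ρ s < pc := by
    intro s h1 h2
    by_contra hge
    push_neg at hge
    have : s ∈ T := (hTmem s).mpr ⟨⟨le_trans ht00 (le_of_lt h1), h2⟩, hge⟩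
    exact absurd (le_csSup hTbdd this) (not_le.mpr h1)
  set hfun : ℝ → ℝ := fun t => (pc - ρ t) * Real.exp (-C * t) with hfundef
  have hderivh : ∀ s ∈ Set.Ioo t0 t1, HasDerivAt hfun
      ((-(F (ρ s))) * Real.exp (-C * s) + (pc - ρ s) * (Real.exp (-C * s) * (-C * 1))) s := by
    intro s hs
    have hs0 : 0 ≤ s := le_trans ht00 (le_of_lt hs.1)
    have h1 : HasDerivAt (fun t => pc - ρ t) (-(F (ρ s))) s := by
      have := hderiv s hs0
      exact HasDerivAt.const_sub pc this
    have hinner : HasDerivAt (fun t : ℝ => -C * t) (-C * 1) s := (hasDerivAt_id s).const_mul (-C)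
    have h2 : HasDerivAt (fun t : ℝ => Real.exp (-C * t))
        (Real.exp (-C * s) * (-C * 1)) s := hinner.exp
    exact h1.mul h2
  have hanti : AntitoneOn hfun (Set.Icc t0 t1) := by
    apply antitoneOn_of_deriv_nonpos (convex_Icc t0 t1)
    · apply ContinuousOn.mul
      · exact continuousOn_const.sub
          (fun s hs => (hρcont s (le_trans ht00 hs.1)).continuousWithinAt)
      · exact ((Real.continuous_exp.comp (continuous_const.mul continuous_id)).continuousOn)
    · rw [interior_Icc]
      intro s hs
      exact ((hderivh s hs).differentiableAt).differentiableWithinAt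
    · rw [interior_Icc]
      intro s hs
      rw [(hderivh s hs).deriv]
      have hs0 : 0 ≤ s := le_trans ht00 (le_of_lt hs.1)
      have hρs := hρmem s hs0
      have hρlt : ρ s < pc := hmid s hs.1 (le_of_lt hs.2)
      have hkey : 0 ≤ F (ρ s) + C * (pc - ρ s) := by
        have := hlip (ρ s) ⟨le_of_lt hρs.1, hρs.2⟩ (le_of_lt hρlt)
        linarith
      have hE : 0 < Real.exp (-C * s) := Real.exp_pos _
      have heq : (-(F (ρ s))) * Real.exp (-C * s) + (pc - ρ s) * (Real.exp (-C * s) * (-C * 1))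
          = -((F (ρ s) + C * (pc - ρ s)) * Real.exp (-C * s)) := by ring
      rw [heq]
      have : 0 ≤ (F (ρ s) + C * (pc - ρ s)) * Real.exp (-C * s) :=
        mul_nonneg hkey (le_of_lt hE)
      linarith
  have hmono := hanti (Set.left_mem_Icc.mpr ht0t1) (Set.right_mem_Icc.mpr ht0t1) ht0t1
  have h0 : hfun t0 ≤ 0 := by
    rw [hfundef]
    simp only
    apply mul_nonpos_of_nonpos_of_nonneg
    · linarith
    · exact le_of_lt (Real.exp_pos _)
  have h1 : 0 < hfun t1 := by
    rw [hfundef]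
    simp only
    apply mul_pos
    · linarith
    · exact Real.exp_pos _
  linarith
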